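/- Let p and q be distinct primes and let H be a subgroup of order q in G = GL(2, 𝔽_p). Then the index [N_G(H) : C_G(H)] divides 2. -/

import Mathlib

open Polynomial


private lemma idem_pow {T : Type*} [CommRing T] (e a b : T) (he : e * e = e) :
    ∀ j : ℕ, (e * a + (1 - e) * b) ^ j = e * a ^ j + (1 - e) * b ^ j := by
  intro j
  induction j with
  | zero => ring
  | succ n ih =>
    rw [pow_succ, ih]
    linear_combination (a ^ n * a - a ^ n * b - b ^ n * a + b ^ n * b) * he

private lemma lemA {T : Type*} [CommRing T] (m s d d' δ : T) (k : ℕ)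
    (hdd' : d * d' = 1) (hΔ : (s * s - 4 * d) * δ = 1)
    (hm : m * m = s * m - d) (hfk : m ^ k * m ^ k = s * m ^ k - d)
    (hd : d ^ k = d) : m ^ (k * k) = m := by
  have hw : (2 * m - s) * (2 * m - s) = s * s - 4 * d := by linear_combination 4 * hm
  have h1 : (m ^ k - m) * (m ^ k - (s - m)) = 0 := by linear_combination hfk - hm
  have he_idem : ((m ^ k - (s - m)) * (2 * m - s) * δ) * ((m ^ k - (s - m)) * (2 * m - s) * δ)
      = (m ^ k - (s - m)) * (2 * m - s) * δ := by
    linear_combination ((m ^ k - (s - m)) * (m ^ k - (s - m)) * δ * δ) * hw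
      + ((m ^ k - (s - m)) * (m ^ k - (s - m)) * δ) * hΔ + δ * h1
  set e := (m ^ k - (s - m)) * (2 * m - s) * δ with he
  have h2 : m ^ k = e * m + (1 - e) * (s - m) := by
    rw [he]
    linear_combination (-(m ^ k - (s - m)) * δ) * hw - (m ^ k - (s - m)) * hΔ
  have h5 : (s - m) * m = d := by linear_combination -hm
  have hvm : (s - m) ^ k * m ^ k = d := by rw [← mul_pow, h5, hd]
  have hA : e * m ^ k = e * m := by
    linear_combination e * h2 + (m - (s - m)) * he_idem
  have h6 : (1 - e) * m ^ k = (1 - e) * (s - m) := by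
    linear_combination (1 - e) * h2 + ((s - m) - m) * he_idem
  have h7 : (1 - e) * (s - m) ^ k * (s - m) = (1 - e) * d := by
    linear_combination (1 - e) * hvm - (s - m) ^ k * h6
  have h8 : (1 - e) * (s - m) ^ k * d = (1 - e) * m * d := by
    linear_combination m * h7 - (1 - e) * (s - m) ^ k * h5
  have hB : (1 - e) * (s - m) ^ k = (1 - e) * m := by
    linear_combination d' * h8 - ((1 - e) * (s - m) ^ k - (1 - e) * m) * hdd'
  have h3 := idem_pow e m (s - m) he_idem k
  rw [← h2] at h3
  calc m ^ (k * k) = (m ^ k) ^ k := by rw [pow_mul]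
    _ = e * m ^ k + (1 - e) * (s - m) ^ k := h3
    _ = m := by linear_combination hA + hB

private lemma lemA' {R : Type*} [CommRing R] (s d d' δ : R) (k : ℕ)
    (hdd' : d * d' = 1) (hΔ : (s * s - 4 * d) * δ = 1) (hd : d ^ k = d) :
    (X ^ (k * k) - X : R[X]) ∈
      Ideal.span {(X ^ 2 - C s * X + C d : R[X]), X ^ k * X ^ k - C s * X ^ k + C d} := by
  set I : Ideal R[X] := Ideal.span {(X ^ 2 - C s * X + C d : R[X]), X ^ k * X ^ k - C s * X ^ k + C d} with hI
  rw [← Ideal.Quotient.eq_zero_iff_mem]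
  set π : R[X] →+* R[X] ⧸ I := Ideal.Quotient.mk I with hπ
  have h1 : π (X ^ 2 - C s * X + C d) = 0 :=
    Ideal.Quotient.eq_zero_iff_mem.2 (Ideal.subset_span (Set.mem_insert _ _))
  have h2 : π (X ^ k * X ^ k - C s * X ^ k + C d) = 0 :=
    Ideal.Quotient.eq_zero_iff_mem.2 (Ideal.subset_span (Set.mem_insert_of_mem _ rfl))
  simp only [map_sub, map_add, map_mul, map_pow] at h1 h2
  have key := lemA (π X) (π (C s)) (π (C d)) (π (C d')) (π (C δ)) k ?_ ?_ ?_ ?_ ?_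
  · rw [map_sub, map_pow, key, sub_self]
  · rw [← map_mul, ← C_mul, hdd', map_one, map_one]
  · have hC : ((C ((s * s - 4 * d) * δ)) : R[X]) = 1 := by rw [hΔ, C_1]
    have := congrArg π hC
    simp only [map_mul, map_sub, map_ofNat, map_one] at this
    linear_combination this
  · linear_combination h1
  · linear_combination h2
  · rw [← map_pow, ← C_pow, hd]

private lemma conjPowAux {p q : ℕ} (hp : p.Prime) (hq : q.Prime) (hne : p ≠ q)
    (u g : GL (Fin 2) (ZMod p)) (hu : orderOf u = q) (k : ℕ)
    (h : g * u * g⁻¹ = u ^ k) : u ^ (k * k) = u := by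
  haveI : Fact p.Prime := ⟨hp⟩
  set M : Matrix (Fin 2) (Fin 2) (ZMod p) := (u : Matrix (Fin 2) (Fin 2) (ZMod p)) with hM
  set P : Matrix (Fin 2) (Fin 2) (ZMod p) := (g : Matrix (Fin 2) (Fin 2) (ZMod p)) with hP
  set Q : Matrix (Fin 2) (Fin 2) (ZMod p) :=
    ((g⁻¹ : GL (Fin 2) (ZMod p)) : Matrix (Fin 2) (Fin 2) (ZMod p)) with hQ
  have hPQ : P * Q = 1 := by rw [hP, hQ, ← Units.val_mul, mul_inv_cancel, Units.val_one]
  have hQP : Q * P = 1 := by rw [hP, hQ, ← Units.val_mul, inv_mul_cancel, Units.val_one]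
  set s := M.trace with hs
  set d := M.det with hd0
  have hCH : M * M = s • M - d • 1 := by
    ext i j
    fin_cases i <;> fin_cases j <;>
      simp [Matrix.mul_apply, Fin.sum_univ_two, Matrix.trace_fin_two, Matrix.det_fin_two,
        Matrix.one_apply, hs, hd0] <;> ring
  have hMk : P * M * Q = M ^ k := by
    have h' := congrArg Units.val h
    rw [Units.val_mul, Units.val_mul, Units.val_pow_eq_pow_val] at h'
    exact h'
  have hdet : d ^ k = d := by
    have h1 := congrArg Matrix.det hMk
    rw [Matrix.det_mul, Matrix.det_mul, Matrix.det_pow] at h1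
    have h2 : P.det * Q.det = 1 := by rw [← Matrix.det_mul, hPQ, Matrix.det_one]
    calc d ^ k = P.det * M.det * Q.det := h1.symm
      _ = M.det * (P.det * Q.det) := by ring
      _ = d := by rw [h2, mul_one]
  have hdne : d ≠ 0 := by
    have hU : IsUnit M := u.isUnit
    rw [Matrix.isUnit_iff_isUnit_det] at hU
    exact hU.ne_zero
  have hfk : M ^ k * M ^ k = s • (M ^ k) - d • 1 := by
    rw [← hMk]
    calc (P * M * Q) * (P * M * Q) = P * (M * M) * Q := by
          rw [show (P * M * Q) * (P * M * Q) = P * M * ((Q * P) * (M * Q)) by noncomm_ring,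
            hQP, one_mul]
          noncomm_ring
      _ = P * (s • M - d • 1) * Q := by rw [hCH]
      _ = s • (P * M * Q) - d • (P * Q) := by
          rw [Matrix.mul_sub, Matrix.sub_mul]
          rw [mul_smul_comm, smul_mul_assoc, mul_smul_comm, smul_mul_assoc, mul_one]
      _ = s • (P * M * Q) - d • 1 := by rw [hPQ]
  by_cases hΔ : s * s - 4 * d = 0
  · -- degenerate: M is scalar
    have hq0 : q ≠ 0 := hq.pos.ne'
    have hMq : M ^ q = 1 := by
      have h1 : u ^ q = 1 := by rw [← hu]; exact pow_orderOf_eq_one u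
      have h2 := congrArg Units.val h1
      rw [Units.val_pow_eq_pow_val, Units.val_one] at h2
      exact h2
    have hscal : ∃ c : ZMod p, M = c • 1 := by
      by_cases hp2 : p = 2
      · subst hp2
        have h42 : (4 : ZMod 2) = 0 := by
          have h44 : ((4 : ℕ) : ZMod 2) = 0 := (ZMod.natCast_eq_zero_iff 4 2).mpr (by norm_num)
          simpa using h44
        have hs0 : s = 0 := by
          have h4 : s * s = 0 := by linear_combination hΔ + d * h42
          exact mul_self_eq_zero.mp h4
        have hM2 : M * M = (-d) • 1 := by
          rw [hCH, hs0, zero_smul, zero_sub, neg_smul]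
        have hqodd : Odd q := hq.odd_of_ne_two (fun hq2 => hne (by omega))
        obtain ⟨m, hm⟩ := hqodd
        refine ⟨(-d) ^ (m + 1), ?_⟩
        have hq1 : M ^ (q + 1) = ((-d) ^ (m + 1)) • 1 := by
          have he : q + 1 = 2 * (m + 1) := by omega
          rw [he, pow_mul, pow_two, hM2, _root_.smul_pow, one_pow]
        rw [← hq1, pow_succ, hMq, one_mul]
      · have h2ne : (2 : ZMod p) ≠ 0 := by
          intro h2
          have h2' : ((2 : ℕ) : ZMod p) = 0 := by simpa using h2
          rw [ZMod.natCast_eq_zero_iff] at h2'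
          exact hp2 ((Nat.prime_dvd_prime_iff_eq hp Nat.prime_two).mp h2')
        have h2inv : (2 : ZMod p) * 2⁻¹ = 1 := mul_inv_cancel₀ h2ne
        set t : ZMod p := 2⁻¹ * s with ht
        set m0 : Matrix (Fin 2) (Fin 2) (ZMod p) := M - t • 1 with hm0def
        have hts : 2 * t = s := by rw [ht]; linear_combination s * h2inv
        have htd : t * t = d := by
          rw [ht]
          linear_combination (2⁻¹ * 2⁻¹) * hΔ + d * (2 * 2⁻¹ + 1) * h2inv
        have hm0 : m0 * m0 = 0 := by
          have expand : m0 * m0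
              = (s - 2 * t) • M + (t * t - d) • (1 : Matrix (Fin 2) (Fin 2) (ZMod p)) := by
            rw [hm0def, sub_mul, mul_sub, mul_sub, hCH]
            simp only [smul_mul_assoc, mul_smul_comm, smul_smul, one_mul, mul_one]
            match_scalars <;> ring
          rw [expand, hts, htd, sub_self, sub_self, zero_smul, zero_smul, add_zero]
        have hMdec : M = t • 1 + m0 := by rw [hm0def]; abel
        have hbin : ∀ j : ℕ, (t • (1 : Matrix (Fin 2) (Fin 2) (ZMod p)) + m0) ^ (j + 1)
            = (t ^ (j + 1)) • 1 + (((j : ZMod p) + 1) * t ^ j) • m0 := by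
          intro j
          induction j with
          | zero => simp
          | succ n ih =>
            rw [pow_succ, ih, add_mul, mul_add, mul_add]
            simp only [smul_mul_assoc, mul_smul_comm, smul_smul, one_mul, mul_one, hm0,
              smul_zero]
            match_scalars <;> push_cast <;> ring
        obtain ⟨r, hr⟩ : ∃ r, q = r + 1 := ⟨q - 1, by omega⟩
        have h1M : (t ^ q) • (1 : Matrix (Fin 2) (Fin 2) (ZMod p))
            + (((r : ZMod p) + 1) * t ^ r) • m0 = 1 := by
          have hb := hbin r
          rw [← hMdec, ← hr, hMq] at hb
          exact hb.symm
        have hsmul : (((r : ZMod p) + 1) * t ^ r) • m0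
            = ((1 : ZMod p) - t ^ q) • (1 : Matrix (Fin 2) (Fin 2) (ZMod p)) := by
          have hsmul' : (((r : ZMod p) + 1) * t ^ r) • m0 = 1 - (t ^ q) • 1 :=
            eq_sub_of_add_eq' h1M
          rw [hsmul', sub_smul, one_smul]
        have hscalar : ((1 : ZMod p) - t ^ q) * ((1 : ZMod p) - t ^ q) = 0 := by
          have h4 : ((((r : ZMod p) + 1) * t ^ r) • m0) * ((((r : ZMod p) + 1) * t ^ r) • m0)
              = 0 := by
            rw [smul_mul_assoc, mul_smul_comm, hm0, smul_zero, smul_zero]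
          rw [hsmul, smul_mul_assoc, mul_smul_comm, smul_smul, mul_one] at h4
          have h5 := congrFun (congrFun h4 0) 0
          simpa [Matrix.smul_apply, Matrix.one_apply] using h5
        have htq : t ^ q = 1 := by
          have h6 := mul_self_eq_zero.mp hscalar
          linear_combination -h6
        have htne : t ≠ 0 := by
          intro h0
          rw [h0, zero_pow hq0] at htq
          exact zero_ne_one htq
        have hqne : ((r : ZMod p) + 1) ≠ 0 := by
          have hcast : ((r : ZMod p) + 1) = ((q : ℕ) : ZMod p) := by
            rw [hr]; push_cast; ring
          rw [hcast, Ne, ZMod.natCast_eq_zero_iff]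
          intro hdvd
          exact hne ((Nat.prime_dvd_prime_iff_eq hp hq).mp hdvd)
        have hc0 : (((r : ZMod p) + 1) * t ^ r) ≠ 0 := mul_ne_zero hqne (pow_ne_zero _ htne)
        have hm00 : m0 = 0 := by
          have h5 : (((r : ZMod p) + 1) * t ^ r) • m0 = 0 := by
            rw [hsmul, htq, sub_self, zero_smul]
          have h7 : m0 = (((r : ZMod p) + 1) * t ^ r)⁻¹ • ((((r : ZMod p) + 1) * t ^ r) • m0) := by
            rw [smul_smul, inv_mul_cancel₀ hc0, one_smul]
          rw [h5, smul_zero] at h7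
          exact h7
        exact ⟨t, by rw [hMdec, hm00, add_zero]⟩
    obtain ⟨c, hc⟩ := hscal
    have hcom : g * u = u * g := by
      have : (g * u).val = (u * g).val := by
        rw [Units.val_mul, Units.val_mul, ← hM, ← hP, hc]
        rw [smul_mul_assoc, Matrix.mul_smul, mul_one, one_mul]
      exact Units.ext this
    have hk1 : u ^ k = u := by
      rw [← h, hcom, mul_assoc, mul_inv_cancel, mul_one]
    rw [pow_mul, hk1, hk1]
  · have hdd' : d * d⁻¹ = 1 := mul_inv_cancel₀ hdne
    have hΔ' : (s * s - 4 * d) * (s * s - 4 * d)⁻¹ = 1 := mul_inv_cancel₀ hΔ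
    have hmem := lemA' s d d⁻¹ (s * s - 4 * d)⁻¹ k hdd' hΔ' hdet
    rw [Ideal.mem_span_pair] at hmem
    obtain ⟨a, b, hab⟩ := hmem
    have hz1 : Polynomial.aeval M ((X : (ZMod p)[X]) ^ 2 - C s * X + C d) = 0 := by
      simp only [map_add, map_sub, map_mul, map_pow, aeval_X, aeval_C,
        Algebra.algebraMap_eq_smul_one]
      rw [pow_two, hCH, smul_mul_assoc, one_mul]
      abel
    have hz2 : Polynomial.aeval M ((X : (ZMod p)[X]) ^ k * X ^ k - C s * X ^ k + C d) = 0 := by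
      simp only [map_add, map_sub, map_mul, map_pow, aeval_X, aeval_C,
        Algebra.algebraMap_eq_smul_one]
      rw [hfk, smul_mul_assoc, one_mul]
      abel
    have h0 := congrArg (Polynomial.aeval M) hab
    rw [map_add, map_mul, map_mul, hz1, hz2, mul_zero, mul_zero, add_zero, map_sub, map_pow,
      aeval_X] at h0
    have hfinal : M ^ (k * k) = M := by
      have := h0.symm
      rwa [sub_eq_zero] at this
    have : (u ^ (k * k)).val = u.val := by
      rw [Units.val_pow_eq_pow_val, ← hM]
      exact hfinal
    exact Units.ext this

theorem normalizer_over_centralizer_dvd_two (p q : ℕ) (hp : p.Prime) (hq : q.Prime)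
    (hne : p ≠ q) (H : Subgroup (GL (Fin 2) (ZMod p))) (hH : Nat.card H = q) :
    (Subgroup.centralizer (H : Set (GL (Fin 2) (ZMod p)))).relIndex (Subgroup.normalizer (H : Set (GL (Fin 2) (ZMod p)))) ∣ 2 := by
  classical
  haveI : Fact p.Prime := ⟨hp⟩
  haveI : Fact q.Prime := ⟨hq⟩
  have hnt : Nontrivial H := Finite.one_lt_card_iff_nontrivial.mp (by rw [hH]; exact hq.one_lt)
  obtain ⟨x, hx1⟩ := exists_ne (1 : H)
  set u : GL (Fin 2) (ZMod p) := (x : GL (Fin 2) (ZMod p)) with hudef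
  have huH : u ∈ H := x.2
  have huq : orderOf u = q := by
    have h1 : orderOf u ∣ q := by
      rw [← hH, Subgroup.orderOf_coe]
      exact orderOf_dvd_natCard x
    rcases (Nat.Prime.eq_one_or_self_of_dvd hq _ h1) with h | h
    · exact absurd (Subtype.ext (orderOf_eq_one_iff.mp h)) hx1
    · exact h
  have hHz : H = Subgroup.zpowers u := by
    have hle : Subgroup.zpowers u ≤ H := Subgroup.zpowers_le.mpr huH
    refine (Subgroup.eq_of_le_of_card_ge hle ?_).symm
    rw [hH, Nat.card_zpowers, huq]
  have hcent : ∀ w : GL (Fin 2) (ZMod p), w * u * w⁻¹ = u →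
      w ∈ Subgroup.centralizer (H : Set (GL (Fin 2) (ZMod p))) := by
    intro w hw
    rw [Subgroup.mem_centralizer_iff]
    intro a ha
    rw [hHz] at ha
    obtain ⟨n, rfl⟩ := Subgroup.mem_zpowers_iff.mp ha
    have hwu : Commute w u := mul_inv_eq_iff_eq_mul.mp hw
    exact ((hwu.zpow_right n).symm).eq
  have hdi : ∀ w : GL (Fin 2) (ZMod p), w ∈ (Subgroup.normalizer (H : Set (GL (Fin 2) (ZMod p)))) →
      w * u * w⁻¹ = u ∨ w * u * w⁻¹ = u⁻¹ := by
    intro w hw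
    have hmem : w * u * w⁻¹ ∈ H := (Subgroup.mem_normalizer_iff.mp hw u).mp huH
    rw [hHz] at hmem
    obtain ⟨n, hn⟩ := Subgroup.mem_zpowers_iff.mp hmem
    have hq0 : ((q : ℤ)) ≠ 0 := by exact_mod_cast hq.pos.ne'
    set k : ℕ := (n % (q : ℤ)).toNat with hk
    have hk' : u ^ k = u ^ n := by
      rw [← zpow_natCast, hk, Int.toNat_of_nonneg (Int.emod_nonneg n hq0)]
      rw [← huq]
      exact zpow_mod_orderOf u n
    have hconj : w * u * w⁻¹ = u ^ k := by rw [hk', hn]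
    have hkk := conjPowAux hp hq hne u w huq k hconj
    have hmod : k * k ≡ 1 [MOD q] := by
      rw [← huq, ← pow_eq_pow_iff_modEq, pow_one]
      exact hkk
    have hcast : ((k : ZMod q)) * (k : ZMod q) = 1 := by
      have hc := (ZMod.natCast_eq_natCast_iff _ _ _).mpr hmod
      push_cast at hc
      exact hc
    rcases mul_self_eq_one_iff.mp hcast with h1 | h1
    · left
      have hmod1 : k ≡ 1 [MOD q] := by
        rw [← ZMod.natCast_eq_natCast_iff]
        push_cast
        exact h1
      have : u ^ k = u ^ 1 := by rw [pow_eq_pow_iff_modEq, huq]; exact hmod1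
      rw [hconj, this, pow_one]
    · right
      have hmod1 : (k + 1) ≡ 0 [MOD q] := by
        rw [← ZMod.natCast_eq_natCast_iff]
        push_cast
        rw [h1]
        ring
      have h2 : u ^ (k + 1) = u ^ 0 := by rw [pow_eq_pow_iff_modEq, huq]; exact hmod1
      rw [pow_succ, pow_zero] at h2
      rw [hconj]
      exact eq_inv_of_mul_eq_one_left h2
  -- counting
  show ((Subgroup.centralizer (H : Set (GL (Fin 2) (ZMod p)))).subgroupOf (Subgroup.normalizer (H : Set (GL (Fin 2) (ZMod p))))).index ∣ 2
  set N := (Subgroup.normalizer (H : Set (GL (Fin 2) (ZMod p)))) with hN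
  set C' := (Subgroup.centralizer (H : Set (GL (Fin 2) (ZMod p)))).subgroupOf N with hC'
  have claim : ∀ x y : N ⧸ C', x ≠ QuotientGroup.mk 1 → y ≠ QuotientGroup.mk 1 → x = y := by
    intro x y hx hy
    obtain ⟨g1, rfl⟩ := QuotientGroup.mk_surjective x
    obtain ⟨g2, rfl⟩ := QuotientGroup.mk_surjective y
    have hnc : ∀ g : N, (QuotientGroup.mk g : N ⧸ C') ≠ QuotientGroup.mk 1 →
        (g : GL (Fin 2) (ZMod p)) * u * (g : GL (Fin 2) (ZMod p))⁻¹ = u⁻¹ := by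
      intro g hg
      rcases hdi (g : GL (Fin 2) (ZMod p)) g.2 with hcase | hcase
      · exfalso
        apply hg
        rw [QuotientGroup.eq]
        refine Subgroup.mem_subgroupOf.mpr ?_
        simp only [Subgroup.coe_mul, Subgroup.coe_inv, OneMemClass.coe_one, mul_one]
        exact (Subgroup.centralizer _).inv_mem (hcent _ hcase)
      · exact hcase
    have ha := hnc g1 hx
    have hb := hnc g2 hy
    rw [QuotientGroup.eq]
    refine Subgroup.mem_subgroupOf.mpr ?_
    rw [Subgroup.coe_mul, Subgroup.coe_inv]
    apply hcent
    have haux : (g1 : GL (Fin 2) (ZMod p))⁻¹ * u⁻¹ * (g1 : GL (Fin 2) (ZMod p)) = u := by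
      rw [← ha]; group
    calc (g1 : GL (Fin 2) (ZMod p))⁻¹ * (g2 : GL (Fin 2) (ZMod p)) * u
          * ((g1 : GL (Fin 2) (ZMod p))⁻¹ * (g2 : GL (Fin 2) (ZMod p)))⁻¹
        = (g1 : GL (Fin 2) (ZMod p))⁻¹
            * ((g2 : GL (Fin 2) (ZMod p)) * u * (g2 : GL (Fin 2) (ZMod p))⁻¹)
            * (g1 : GL (Fin 2) (ZMod p)) := by group
      _ = (g1 : GL (Fin 2) (ZMod p))⁻¹ * u⁻¹ * (g1 : GL (Fin 2) (ZMod p)) := by rw [hb]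
      _ = u := haux
  rw [Subgroup.index_eq_card]
  have hcard2 : Nat.card (N ⧸ C') ≤ 2 := by
    have hinj : Function.Injective (fun z : N ⧸ C' => decide (z = QuotientGroup.mk 1)) := by
      intro a b hab
      simp only [decide_eq_decide] at hab
      by_cases hA : a = QuotientGroup.mk 1
      · exact hA.trans (hab.mp hA).symm
      · exact claim a b hA (fun hB => hA (hab.mpr hB))
    calc Nat.card (N ⧸ C') ≤ Nat.card Bool := Nat.card_le_card_of_injective _ hinj
      _ = 2 := by simp [Nat.card_eq_fintype_card]
  have hpos : 0 < Nat.card (N ⧸ C') := Nat.card_pos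
  interval_cases h : Nat.card (N ⧸ C') <;> norm_num
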